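/- For every integer n ≥ 1, the total number of partial matchings of [n-1] avoiding both neighbor alignments and left nestings equals Σ_{k=0}^{⌊(n-1)/2⌋} S(n-k, n-2k), where S denotes the Stirling numbers of the second kind. -/

import Mathlib

open Finset

/-- `(i, j)` is an arc of the linear representation of the set partition `P` of
`{1, ..., n}`: `i < j`, both lie in the same block, and no element of that block
lies strictly between them. -/
def IsArc {n : ℕ} (P : Finpartition (Finset.Icc 1 n)) (a : ℕ × ℕ) : Prop :=
  a.1 < a.2 ∧ ∃ B ∈ P.parts, a.1 ∈ B ∧ a.2 ∈ B ∧ ∀ c ∈ B, ¬ (a.1 < c ∧ c < a.2)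

/-- The number of arcs of a set partition. -/
noncomputable def numArcs {n : ℕ} (P : Finpartition (Finset.Icc 1 n)) : ℕ :=
  {a : ℕ × ℕ | IsArc P a}.ncard

/-- A partial matching: every block has at most two elements. -/
def IsMatching {n : ℕ} (P : Finpartition (Finset.Icc 1 n)) : Prop :=
  ∀ B ∈ P.parts, B.card ≤ 2

/-- A neighbor alignment: arcs `(i₁, j₁)`, `(i₂, j₂)` with `i₁ < j₁ < i₂ < j₂`
and `j₁ + 1 = i₂`. -/
def HasNbrAlign {n : ℕ} (P : Finpartition (Finset.Icc 1 n)) : Prop :=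
  ∃ a b : ℕ × ℕ, IsArc P a ∧ IsArc P b ∧ a.2 + 1 = b.1

/-- A left nesting: arcs `(i₁, j₁)`, `(i₂, j₂)` with `i₁ < i₂ < j₂ < j₁`
and `i₁ + 1 = i₂`. -/
def HasLeftNesting {n : ℕ} (P : Finpartition (Finset.Icc 1 n)) : Prop :=
  ∃ a b : ℕ × ℕ, IsArc P a ∧ IsArc P b ∧ a.1 + 1 = b.1 ∧ b.2 < a.2

/-- A right nesting: arcs `(i₁, j₁)`, `(i₂, j₂)` with `i₁ < i₂ < j₂ < j₁`
and `j₂ + 1 = j₁`. -/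
def HasRightNesting {n : ℕ} (P : Finpartition (Finset.Icc 1 n)) : Prop :=
  ∃ a b : ℕ × ℕ, IsArc P a ∧ IsArc P b ∧ a.1 < b.1 ∧ b.2 + 1 = a.2

/-- The number of left crossings: pairs of arcs `(i₁, j₁)`, `(i₂, j₂)` with
`i₁ < i₂ < j₁ < j₂` and `i₁ + 1 = i₂`. -/
noncomputable def numLeftCrossings {n : ℕ} (P : Finpartition (Finset.Icc 1 n)) : ℕ :=
  {p : (ℕ × ℕ) × (ℕ × ℕ) |
    IsArc P p.1 ∧ IsArc P p.2 ∧ p.1.1 + 1 = p.2.1 ∧ p.2.1 < p.1.2 ∧ p.1.2 < p.2.2}.ncard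

/-- The number of transients: elements of a block that are neither the minimum
nor the maximum of their block. -/
noncomputable def numTransients {n : ℕ} (P : Finpartition (Finset.Icc 1 n)) : ℕ :=
  {x : ℕ | ∃ B ∈ P.parts, x ∈ B ∧ (∃ y ∈ B, y < x) ∧ (∃ y ∈ B, x < y)}.ncard

/-- `Pnum n k`: the number of partial matchings of `[n]` with exactly `k` arcs
and no neighbor alignments. -/
noncomputable def Pnum (n k : ℕ) : ℕ :=
  {P : Finpartition (Finset.Icc 1 n) |
    IsMatching P ∧ numArcs P = k ∧ ¬ HasNbrAlign P}.ncard

/-- `Qnum n k`: the number of partial matchings of `[n]` with exactly `k` arcs,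
no neighbor alignments and no left nestings. -/
noncomputable def Qnum (n k : ℕ) : ℕ :=
  {P : Finpartition (Finset.Icc 1 n) |
    IsMatching P ∧ numArcs P = k ∧ ¬ HasNbrAlign P ∧ ¬ HasLeftNesting P}.ncard

/-- `Rnum n k`: the number of partial matchings of `[n]` with exactly `k` arcs,
no neighbor alignments, no left nestings and no right nestings. -/
noncomputable def Rnum (n k : ℕ) : ℕ :=
  {P : Finpartition (Finset.Icc 1 n) |
    IsMatching P ∧ numArcs P = k ∧ ¬ HasNbrAlign P ∧ ¬ HasLeftNesting P ∧
      ¬ HasRightNesting P}.ncard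

/-- `Tnum n k`: the number of set partitions of `[n]` with exactly `k` arcs and
no right nestings. -/
noncomputable def Tnum (n k : ℕ) : ℕ :=
  {P : Finpartition (Finset.Icc 1 n) | numArcs P = k ∧ ¬ HasRightNesting P}.ncard

/-- `Stirling m b`: the Stirling number of the second kind, the number of set
partitions of `{1, ..., m}` into `b` blocks. -/
noncomputable def Stirling (m b : ℕ) : ℕ :=
  {P : Finpartition (Finset.Icc 1 m) | P.parts.card = b}.ncard

namespace SPAux
open Finset

/-! ### Arc sets -/

def Bnds (s : ℕ) (A : Finset (ℕ × ℕ)) : Prop := ∀ a ∈ A, 1 ≤ a.1 ∧ a.1 < a.2 ∧ a.2 ≤ s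
def FstU (A : Finset (ℕ × ℕ)) : Prop := ∀ a ∈ A, ∀ b ∈ A, a.1 = b.1 → a = b
def SndU (A : Finset (ℕ × ℕ)) : Prop := ∀ a ∈ A, ∀ b ∈ A, a.2 = b.2 → a = b
def ValidA (s : ℕ) (A : Finset (ℕ × ℕ)) : Prop := Bnds s A ∧ FstU A ∧ SndU A
def MatA (A : Finset (ℕ × ℕ)) : Prop := ∀ a ∈ A, ∀ b ∈ A, a.2 ≠ b.1
def NAA (A : Finset (ℕ × ℕ)) : Prop := ∃ a ∈ A, ∃ b ∈ A, a.2 + 1 = b.1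
def LNA (A : Finset (ℕ × ℕ)) : Prop := ∃ a ∈ A, ∃ b ∈ A, a.1 + 1 = b.1 ∧ b.2 < a.2

open scoped Classical in
noncomputable def arcsets (s : ℕ) : Finset (Finset (ℕ × ℕ)) :=
  ((Icc 1 s ×ˢ Icc 1 s).powerset).filter (ValidA s)

open scoped Classical in
noncomputable def StA (s b : ℕ) : ℕ := ((arcsets s).filter (fun A => s - A.card = b)).card

open scoped Classical in
noncomputable def QA (m k : ℕ) : ℕ :=
  ((arcsets m).filter (fun A => MatA A ∧ A.card = k ∧ ¬ NAA A ∧ ¬ LNA A)).card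

theorem mem_arcsets {s : ℕ} {A : Finset (ℕ × ℕ)} : A ∈ arcsets s ↔ ValidA s A := by
  classical
  simp only [arcsets, mem_filter, mem_powerset, and_iff_right_iff_imp]
  intro h p hp
  obtain ⟨h1, h2, h3⟩ := h.1 p hp
  simp only [mem_product, mem_Icc]
  omega

theorem card_snd_image {A : Finset (ℕ × ℕ)} (h : SndU A) :
    (A.image Prod.snd).card = A.card :=
  Finset.card_image_of_injOn fun a ha b hb hab => h a ha b hb hab

theorem card_fst_image {A : Finset (ℕ × ℕ)} (h : FstU A) :
    (A.image Prod.fst).card = A.card :=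
  Finset.card_image_of_injOn fun a ha b hb hab => h a ha b hb hab

theorem snd_image_subset {s : ℕ} {A : Finset (ℕ × ℕ)} (h : ValidA s A) :
    A.image Prod.snd ⊆ Icc 2 s := by
  intro x hx
  simp only [mem_image] at hx
  obtain ⟨a, ha, rfl⟩ := hx
  obtain ⟨h1, h2, h3⟩ := h.1 a ha
  simp only [mem_Icc]; omega

theorem fst_image_subset {s : ℕ} {A : Finset (ℕ × ℕ)} (h : ValidA s A) :
    A.image Prod.fst ⊆ Icc 1 s := by
  intro x hx
  simp only [mem_image] at hx
  obtain ⟨a, ha, rfl⟩ := hx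
  obtain ⟨h1, h2, h3⟩ := h.1 a ha
  simp only [mem_Icc]; omega

theorem card_lt_of_valid {s : ℕ} {A : Finset (ℕ × ℕ)} (h : ValidA s A) (hA : A.Nonempty) :
    A.card < s := by
  have h1 : (A.image Prod.snd).card ≤ (Icc 2 s).card := card_le_card (snd_image_subset h)
  rw [card_snd_image h.2.2] at h1
  have h2 : 2 ≤ s := by
    obtain ⟨a, ha⟩ := hA
    obtain ⟨g1, g2, g3⟩ := h.1 a ha
    omega
  have := Nat.card_Icc 2 s
  omega

theorem card_le_of_valid {s : ℕ} {A : Finset (ℕ × ℕ)} (h : ValidA s A) : A.card ≤ s := by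
  rcases A.eq_empty_or_nonempty with rfl | hA
  · simp
  · exact (card_lt_of_valid h hA).le

theorem two_mul_card_le {m : ℕ} {A : Finset (ℕ × ℕ)} (hv : ValidA m A) (hm : MatA A) :
    2 * A.card ≤ m := by
  have hd : Disjoint (A.image Prod.fst) (A.image Prod.snd) := by
    rw [Finset.disjoint_left]
    intro x hx hy
    simp only [mem_image] at hx hy
    obtain ⟨a, ha, rfl⟩ := hx
    obtain ⟨b, hb, hba⟩ := hy
    exact hm b hb a ha hba
  have hsub : (A.image Prod.fst) ∪ (A.image Prod.snd) ⊆ Icc 1 m := by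
    apply Finset.union_subset (fst_image_subset hv)
    exact (snd_image_subset hv).trans (Icc_subset_Icc (by norm_num) le_rfl)
  have := Finset.card_le_card hsub
  rw [Finset.card_union_of_disjoint hd, card_fst_image hv.2.1, card_snd_image hv.2.2,
    Nat.card_Icc] at this
  omega

theorem validA_empty (s : ℕ) : ValidA s (∅ : Finset (ℕ × ℕ)) := by
  refine ⟨?_, ?_, ?_⟩ <;> intro a ha <;> simp at ha

theorem QA_zero (m : ℕ) : QA m 0 = 1 := by
  classical
  have : ((arcsets m).filter (fun A => MatA A ∧ A.card = 0 ∧ ¬ NAA A ∧ ¬ LNA A)) = {∅} := by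
    ext A
    simp only [mem_filter, mem_singleton, mem_arcsets]
    constructor
    · rintro ⟨-, -, hc, -⟩
      exact Finset.card_eq_zero.1 hc
    · rintro rfl
      refine ⟨validA_empty m, ?_, by simp, ?_, ?_⟩
      · intro a ha; simp at ha
      · rintro ⟨a, ha, -⟩; simp at ha
      · rintro ⟨a, ha, -⟩; simp at ha
  rw [QA, this, card_singleton]

theorem QA_eq_zero {m k : ℕ} (h : m < 2 * k) : QA m k = 0 := by
  classical
  rw [QA, Finset.card_eq_zero, Finset.filter_eq_empty_iff]
  intro A hA
  rintro ⟨hm, hc, -, -⟩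
  have := two_mul_card_le (mem_arcsets.1 hA) hm
  omega

theorem StA_self (s : ℕ) : StA s s = 1 := by
  classical
  have : ((arcsets s).filter (fun A => s - A.card = s)) = {∅} := by
    ext A
    simp only [mem_filter, mem_singleton, mem_arcsets]
    constructor
    · rintro ⟨hv, hc⟩
      rcases A.eq_empty_or_nonempty with rfl | hA
      · rfl
      · have := card_lt_of_valid hv hA
        have hpos : 0 < A.card := Finset.card_pos.2 hA
        omega
    · rintro rfl
      exact ⟨validA_empty s, by simp⟩
  rw [StA, this, card_singleton]

theorem StA_zero {s : ℕ} (hs : 1 ≤ s) : StA s 0 = 0 := by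
  classical
  rw [StA, Finset.card_eq_zero, Finset.filter_eq_empty_iff]
  intro A hA hc
  have := card_le_of_valid (mem_arcsets.1 hA)
  rcases A.eq_empty_or_nonempty with rfl | hne
  · simp at hc; omega
  · have := card_lt_of_valid (mem_arcsets.1 hA) hne
    omega

end SPAux

namespace SPAux
open Finset

theorem StA_rec (s b : ℕ) : StA (s+1) (b+1) = StA s b + (b+1) * StA s (b+1) := by
  classical
  have hsplit : ((arcsets (s+1)).filter (fun A => (s+1) - A.card = b+1)).card
      = ((arcsets (s+1)).filter (fun A => ((s+1) - A.card = b+1) ∧ ∀ a ∈ A, a.2 ≠ s+1)).card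
      + ((arcsets (s+1)).filter (fun A => ((s+1) - A.card = b+1) ∧ ¬ ∀ a ∈ A, a.2 ≠ s+1)).card := by
    rw [← Finset.card_union_of_disjoint (by
      rw [Finset.disjoint_left]; intro A h1 h2
      simp only [mem_filter] at h1 h2; tauto)]
    congr 1; ext A; simp only [mem_union, mem_filter]; tauto
  -- L₀ : no arc ends at s+1
  have hL0 : ((arcsets (s+1)).filter (fun A => ((s+1) - A.card = b+1) ∧ ∀ a ∈ A, a.2 ≠ s+1))
      = (arcsets s).filter (fun A => s - A.card = b) := by
    ext A
    simp only [mem_filter, mem_arcsets, and_assoc]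
    constructor
    · rintro ⟨hv, hc, hne⟩
      have hv' : ValidA s A := by
        refine ⟨?_, hv.2.1, hv.2.2⟩
        intro a ha
        have := hv.1 a ha
        have := hne a ha
        omega
      have := card_le_of_valid hv'
      exact ⟨hv', by omega⟩
    · rintro ⟨hv, hc⟩
      have hcle := card_le_of_valid hv
      refine ⟨⟨?_, hv.2.1, hv.2.2⟩, by omega, ?_⟩
      · intro a ha; have := hv.1 a ha; omega
      · intro a ha; have := hv.1 a ha; omega
  -- L₁ : some arc ends at s+1
  have hT : (((arcsets s).filter (fun A => s - A.card = b+1)).sigma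
      (fun A => (Icc 1 s) \ (A.image Prod.fst))).card = (b+1) * StA s (b+1) := by
    rw [Finset.card_sigma]
    have hfib : ∀ A ∈ (arcsets s).filter (fun A => s - A.card = b+1),
        ((Icc 1 s) \ (A.image Prod.fst)).card = b+1 := by
      intro A hA
      simp only [mem_filter, mem_arcsets] at hA
      obtain ⟨hv, hc⟩ := hA
      rw [Finset.card_sdiff_of_subset (fst_image_subset hv), card_fst_image hv.2.1, Nat.card_Icc]
      have := card_le_of_valid hv
      omega
    rw [Finset.sum_congr rfl hfib, Finset.sum_const, smul_eq_mul]
    have : StA s (b+1) = ((arcsets s).filter (fun A => s - A.card = b+1)).card := rfl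
    rw [this, Nat.mul_comm]
  have hL1 : (((arcsets s).filter (fun A => s - A.card = b+1)).sigma
      (fun A => (Icc 1 s) \ (A.image Prod.fst))).card
      = ((arcsets (s+1)).filter
        (fun A => ((s+1) - A.card = b+1) ∧ ¬ ∀ a ∈ A, a.2 ≠ s+1)).card := by
    refine Finset.card_bij (fun p _ => insert (p.2, s+1) p.1) ?_ ?_ ?_
    · rintro ⟨A, j⟩ hp
      simp only [Finset.mem_sigma, mem_filter, mem_arcsets, mem_sdiff, mem_Icc, mem_image] at hp
      obtain ⟨⟨hv, hc⟩, ⟨hj1, hj2⟩, hjn⟩ := hp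
      have hjn' : ∀ x ∈ A, x.1 ≠ j := fun x hx h => hjn ⟨x, hx, h⟩
      have hnotmem : (j, s+1) ∉ A := by
        intro hmem
        have h2 : s + 1 ≤ s := (hv.1 _ hmem).2.2
        omega
      have hcard : A.card ≤ s := card_le_of_valid hv
      simp only [mem_filter, mem_arcsets]
      refine ⟨⟨?_, ?_, ?_⟩, ?_, ?_⟩
      · intro a ha
        rcases Finset.mem_insert.1 ha with rfl | ha'
        · exact ⟨hj1, Nat.lt_succ_of_le hj2, le_rfl⟩
        · have := hv.1 a ha'; omega
      · intro a ha c hc' hac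
        rcases Finset.mem_insert.1 ha with rfl | ha' <;>
          rcases Finset.mem_insert.1 hc' with rfl | hc''
        · rfl
        · exact absurd hac.symm (hjn' c hc'')
        · exact absurd hac (hjn' a ha')
        · exact hv.2.1 a ha' c hc'' hac
      · intro a ha c hc' hac
        rcases Finset.mem_insert.1 ha with rfl | ha' <;>
          rcases Finset.mem_insert.1 hc' with rfl | hc''
        · rfl
        · exfalso
          have h1 : s + 1 = c.2 := hac
          have := hv.1 c hc''; omega
        · exfalso
          have h1 : a.2 = s + 1 := hac
          have := hv.1 a ha'; omega
        · exact hv.2.2 a ha' c hc'' hac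
      · rw [Finset.card_insert_of_notMem hnotmem]; omega
      · push_neg
        exact ⟨(j, s+1), Finset.mem_insert_self _ _, rfl⟩
    · rintro ⟨A₁, j₁⟩ hp₁ ⟨A₂, j₂⟩ hp₂ heq
      simp only [Finset.mem_sigma, mem_filter, mem_arcsets, mem_sdiff, mem_Icc, mem_image] at hp₁ hp₂
      change insert (j₁, s+1) A₁ = insert (j₂, s+1) A₂ at heq
      have hsnd₁ : ∀ a ∈ A₁, a.2 ≠ s + 1 := by
        intro a ha
        have := hp₁.1.1.1 a ha; omega
      have hsnd₂ : ∀ a ∈ A₂, a.2 ≠ s + 1 := by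
        intro a ha
        have := hp₂.1.1.1 a ha; omega
      have hj : j₁ = j₂ := by
        have h1 : ((j₁ : ℕ), s+1) ∈ insert ((j₂ : ℕ), s+1) A₂ := by
          rw [← heq]; exact Finset.mem_insert_self _ _
        rcases Finset.mem_insert.1 h1 with h | h
        · exact congrArg Prod.fst h
        · exact absurd rfl (hsnd₂ _ h)
      subst hj
      have hA : A₁ = A₂ := by
        ext p
        constructor
        · intro hmem
          have h1 : p ∈ insert ((j₁ : ℕ), s+1) A₂ := by
            rw [← heq]; exact Finset.mem_insert_of_mem hmem
          rcases Finset.mem_insert.1 h1 with rfl | h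
          · exact absurd rfl (hsnd₁ _ hmem)
          · exact h
        · intro hmem
          have h1 : p ∈ insert ((j₁ : ℕ), s+1) A₁ := by
            rw [heq]; exact Finset.mem_insert_of_mem hmem
          rcases Finset.mem_insert.1 h1 with rfl | h
          · exact absurd rfl (hsnd₂ _ hmem)
          · exact h
      subst hA
      rfl
    · intro A hA
      simp only [mem_filter, mem_arcsets] at hA
      obtain ⟨hv, hc, hex⟩ := hA
      push_neg at hex
      obtain ⟨a, ha, ha2⟩ := hex
      obtain ⟨j, j2⟩ := a
      have hj2' : j2 = s + 1 := ha2
      subst hj2'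
      have hvA' : ValidA s (A.erase (j, s+1)) := by
        refine ⟨?_, ?_, ?_⟩
        · intro c hc'
          have hc'' := Finset.mem_of_mem_erase hc'
          have hb := hv.1 c hc''
          have : c.2 ≠ s + 1 := by
            intro h2
            have := hv.2.2 c hc'' (j, s+1) ha h2
            exact Finset.notMem_erase _ _ (this ▸ hc')
          omega
        · intro c hc' d hd
          exact hv.2.1 c (Finset.mem_of_mem_erase hc') d (Finset.mem_of_mem_erase hd)
        · intro c hc' d hd
          exact hv.2.2 c (Finset.mem_of_mem_erase hc') d (Finset.mem_of_mem_erase hd)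
      have hcardA : 1 ≤ A.card := Finset.card_pos.2 ⟨_, ha⟩
      have hcerase : (A.erase (j, s+1)).card = A.card - 1 :=
        Finset.card_erase_of_mem ha
      have hcle := card_le_of_valid hv
      refine ⟨⟨A.erase (j, s+1), j⟩, ?_, ?_⟩
      · simp only [Finset.mem_sigma, mem_filter, mem_arcsets, mem_sdiff, mem_Icc, mem_image]
        refine ⟨⟨hvA', by omega⟩, ⟨?_, ?_⟩, ?_⟩
        · exact (hv.1 _ ha).1
        · have := hv.1 _ ha
          have h1 : j < s + 1 := this.2.1
          omega
        · rintro ⟨c, hc', hcj⟩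
          have hcj' : c = (j, s + 1) := by
            have : c.1 = (j, s+1).1 := hcj
            exact hv.2.1 c (Finset.mem_of_mem_erase hc') (j, s+1) ha this
          exact Finset.notMem_erase _ _ (hcj' ▸ hc')
      · show insert (j, s+1) (A.erase (j, s+1)) = A
        exact Finset.insert_erase ha
  have hdef : StA (s+1) (b+1) = ((arcsets (s+1)).filter (fun A => (s+1) - A.card = b+1)).card := rfl
  rw [hdef, hsplit, hL0, ← hL1, hT]
  rfl

end SPAux

namespace SPAux
open Finset

def sh (t x : ℕ) : ℕ := if t ≤ x then x + 1 else x
def shp (t : ℕ) (a : ℕ × ℕ) : ℕ × ℕ := (sh t a.1, sh t a.2)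
def ush (t x : ℕ) : ℕ := if t < x then x - 1 else x
def ushp (t : ℕ) (a : ℕ × ℕ) : ℕ × ℕ := (ush t a.1, ush t a.2)

theorem sh_inj {t : ℕ} : Function.Injective (sh t) := by
  intro x y h; simp only [sh] at h; split_ifs at h <;> omega

theorem shp_inj {t : ℕ} : Function.Injective (shp t) := by
  rintro ⟨x1, x2⟩ ⟨y1, y2⟩ h
  simp only [shp, Prod.mk.injEq] at h
  obtain ⟨h1, h2⟩ := h
  rw [sh_inj h1, sh_inj h2]

theorem sh_lt {t x y : ℕ} : sh t x < sh t y ↔ x < y := by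
  simp only [sh]; split_ifs <;> omega

theorem sh_ne (t x : ℕ) : sh t x ≠ t := by
  simp only [sh]; split_ifs <;> omega

theorem sh_le_of_le {t x m : ℕ} (h : x ≤ m) : sh t x ≤ m + 1 := by
  simp only [sh]; split_ifs <;> omega

theorem sh_pos {t x : ℕ} (h : 1 ≤ x) : 1 ≤ sh t x := by
  simp only [sh]; split_ifs <;> omega

theorem sh_ush {t x : ℕ} (hx : x ≠ t) : sh t (ush t x) = x := by
  simp only [sh, ush]; split_ifs <;> omega

/-- The matching recurrence. -/
theorem QA_rec (m k : ℕ) :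
    QA (m+2) (k+1) = QA (m+1) (k+1) + (m+1-2*k) * QA m k := by
  classical
  have hsplit : ((arcsets (m+2)).filter
        (fun A => MatA A ∧ A.card = k+1 ∧ ¬ NAA A ∧ ¬ LNA A)).card
      = ((arcsets (m+2)).filter
        (fun A => (MatA A ∧ A.card = k+1 ∧ ¬ NAA A ∧ ¬ LNA A) ∧ ∀ a ∈ A, a.2 ≠ m+2)).card
      + ((arcsets (m+2)).filter
        (fun A => (MatA A ∧ A.card = k+1 ∧ ¬ NAA A ∧ ¬ LNA A) ∧ ¬ ∀ a ∈ A, a.2 ≠ m+2)).card := by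
    rw [← Finset.card_union_of_disjoint (by
      rw [Finset.disjoint_left]; intro A h1 h2
      simp only [mem_filter] at h1 h2; tauto)]
    congr 1; ext A; simp only [mem_union, mem_filter]; tauto
  have hL0 : ((arcsets (m+2)).filter
        (fun A => (MatA A ∧ A.card = k+1 ∧ ¬ NAA A ∧ ¬ LNA A) ∧ ∀ a ∈ A, a.2 ≠ m+2))
      = (arcsets (m+1)).filter (fun A => MatA A ∧ A.card = k+1 ∧ ¬ NAA A ∧ ¬ LNA A) := by
    ext A
    simp only [mem_filter, mem_arcsets]
    constructor
    · rintro ⟨hv, hprops, hne⟩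
      refine ⟨⟨?_, hv.2.1, hv.2.2⟩, hprops⟩
      intro a ha
      have := hv.1 a ha
      have := hne a ha
      omega
    · rintro ⟨hv, hprops⟩
      refine ⟨⟨?_, hv.2.1, hv.2.2⟩, hprops, ?_⟩
      · intro a ha; have := hv.1 a ha; omega
      · intro a ha; have := hv.1 a ha; omega
  -- fiber counting
  have hT : (((arcsets m).filter (fun A => MatA A ∧ A.card = k ∧ ¬ NAA A ∧ ¬ LNA A)).sigma
      (fun A => (Icc 1 (m+1)).filter
        (fun t => (∀ a ∈ A, a.2 + 1 ≠ t) ∧ (∀ a ∈ A, a.1 ≠ t)))).card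
      = (m+1-2*k) * QA m k := by
    rw [Finset.card_sigma]
    have hfib : ∀ A ∈ (arcsets m).filter (fun A => MatA A ∧ A.card = k ∧ ¬ NAA A ∧ ¬ LNA A),
        ((Icc 1 (m+1)).filter
          (fun t => (∀ a ∈ A, a.2 + 1 ≠ t) ∧ (∀ a ∈ A, a.1 ≠ t))).card = m+1-2*k := by
      intro A hA
      simp only [mem_filter, mem_arcsets] at hA
      obtain ⟨hv, hmat, hcard, hna, hln⟩ := hA
      have hsub : (A.image (fun a => a.2 + 1)) ∪ (A.image Prod.fst) ⊆ Icc 1 (m+1) := by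
        apply Finset.union_subset
        · intro x hx
          simp only [mem_image] at hx
          obtain ⟨a, ha, rfl⟩ := hx
          have := hv.1 a ha
          simp only [mem_Icc]; omega
        · intro x hx
          simp only [mem_image] at hx
          obtain ⟨a, ha, rfl⟩ := hx
          have := hv.1 a ha
          simp only [mem_Icc]; omega
      have hdisj : Disjoint (A.image (fun a => a.2 + 1)) (A.image Prod.fst) := by
        rw [Finset.disjoint_left]
        rintro x hx hy
        simp only [mem_image] at hx hy
        obtain ⟨a, ha, rfl⟩ := hx
        obtain ⟨b, hb, hba⟩ := hy
        exact hna ⟨a, ha, b, hb, hba.symm⟩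
      have himg1 : (A.image (fun a => a.2 + 1)).card = k := by
        rw [Finset.card_image_of_injOn, hcard]
        intro a ha b hb hab
        have hab' : a.2 + 1 = b.2 + 1 := hab
        exact hv.2.2 a ha b hb (by omega)
      have himg2 : (A.image Prod.fst).card = k := by
        rw [card_fst_image hv.2.1, hcard]
      have hflt : (Icc 1 (m+1)).filter
          (fun t => (∀ a ∈ A, a.2 + 1 ≠ t) ∧ (∀ a ∈ A, a.1 ≠ t))
          = Icc 1 (m+1) \ ((A.image (fun a => a.2 + 1)) ∪ (A.image Prod.fst)) := by
        ext t
        simp only [mem_filter, mem_sdiff, mem_union, mem_image]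
        constructor
        · rintro ⟨ht, h1, h2⟩
          refine ⟨ht, ?_⟩
          rintro (⟨a, ha, rfl⟩ | ⟨a, ha, rfl⟩)
          · exact h1 a ha rfl
          · exact h2 a ha rfl
        · rintro ⟨ht, h⟩
          push_neg at h
          exact ⟨ht, fun a ha => h.1 a ha, fun a ha => h.2 a ha⟩
      rw [hflt, Finset.card_sdiff_of_subset hsub, Finset.card_union_of_disjoint hdisj,
        himg1, himg2, Nat.card_Icc]
      have h2k : 2 * A.card ≤ m := two_mul_card_le hv hmat
      omega
    rw [Finset.sum_congr rfl hfib, Finset.sum_const, smul_eq_mul]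
    have : QA m k = ((arcsets m).filter (fun A => MatA A ∧ A.card = k ∧ ¬ NAA A ∧ ¬ LNA A)).card := rfl
    rw [this, Nat.mul_comm]
  -- the bijection
  have hL1 : (((arcsets m).filter (fun A => MatA A ∧ A.card = k ∧ ¬ NAA A ∧ ¬ LNA A)).sigma
      (fun A => (Icc 1 (m+1)).filter
        (fun t => (∀ a ∈ A, a.2 + 1 ≠ t) ∧ (∀ a ∈ A, a.1 ≠ t)))).card
      = ((arcsets (m+2)).filter
        (fun A => (MatA A ∧ A.card = k+1 ∧ ¬ NAA A ∧ ¬ LNA A) ∧ ¬ ∀ a ∈ A, a.2 ≠ m+2)).card := by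
    refine Finset.card_bij (fun p _ => insert (p.2, m+2) (p.1.image (shp p.2))) ?_ ?_ ?_
    · rintro ⟨A, t⟩ hp
      simp only [Finset.mem_sigma, mem_filter, mem_arcsets, mem_Icc] at hp
      obtain ⟨⟨hv, hmat, hcard, hna, hln⟩, ⟨ht1, ht2⟩, hs1, hs2⟩ := hp
      have hmem : ∀ b ∈ insert ((t : ℕ), m+2) (A.image (shp t)),
          b = (t, m+2) ∨ ∃ a ∈ A, shp t a = b := by
        intro b hb
        rcases Finset.mem_insert.1 hb with rfl | hb'
        · exact Or.inl rfl
        · simp only [mem_image] at hb'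
          exact Or.inr hb'
      have hnotmem : ((t : ℕ), m+2) ∉ A.image (shp t) := by
        simp only [mem_image]
        rintro ⟨a, ha, hae⟩
        have h2 : sh t a.2 = m + 2 := congrArg Prod.snd hae
        have := hv.1 a ha
        have := sh_le_of_le (t := t) this.2.2
        omega
      simp only [mem_filter, mem_arcsets]
      refine ⟨⟨?_, ?_, ?_⟩, ⟨?_, ?_, ?_, ?_⟩, ?_⟩
      -- bounds
      · intro b hb
        rcases hmem b hb with rfl | ⟨a, ha, rfl⟩
        · exact ⟨ht1, by omega, le_rfl⟩
        · have hb' := hv.1 a ha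
          refine ⟨sh_pos hb'.1, sh_lt.2 hb'.2.1, ?_⟩
          show sh t a.2 ≤ m + 2
          have := sh_le_of_le (t := t) hb'.2.2
          omega
      -- FstU
      · intro b hb c hc hbc
        rcases hmem b hb with rfl | ⟨a, ha, rfl⟩ <;> rcases hmem c hc with rfl | ⟨a', ha', rfl⟩
        · rfl
        · exact absurd (congrArg id hbc).symm (by simpa [shp] using sh_ne t a'.1)
        · exact absurd (congrArg id hbc) (by simpa [shp] using sh_ne t a.1)
        · have : a.1 = a'.1 := sh_inj hbc
          rw [hv.2.1 a ha a' ha' this]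
      -- SndU
      · intro b hb c hc hbc
        rcases hmem b hb with rfl | ⟨a, ha, rfl⟩ <;> rcases hmem c hc with rfl | ⟨a', ha', rfl⟩
        · rfl
        · exfalso
          have h2 : sh t a'.2 ≤ m + 1 := sh_le_of_le (hv.1 a' ha').2.2
          have h3 : (m : ℕ) + 2 = sh t a'.2 := hbc
          omega
        · exfalso
          have h2 : sh t a.2 ≤ m + 1 := sh_le_of_le (hv.1 a ha).2.2
          have h3 : sh t a.2 = (m : ℕ) + 2 := hbc
          omega
        · have : a.2 = a'.2 := sh_inj hbc
          rw [hv.2.2 a ha a' ha' this]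
      -- MatA
      · intro b hb c hc hbc
        rcases hmem b hb with rfl | ⟨a, ha, rfl⟩ <;> rcases hmem c hc with rfl | ⟨a', ha', rfl⟩
        · have h3 : (m : ℕ) + 2 = t := hbc
          omega
        · have h3 : (m : ℕ) + 2 = sh t a'.1 := hbc
          have h2 : sh t a'.1 ≤ m + 1 := sh_le_of_le (by have := hv.1 a' ha'; omega)
          omega
        · exact absurd hbc (sh_ne t a.2)
        · exact hmat a ha a' ha' (sh_inj hbc)
      -- card
      · rw [Finset.card_insert_of_notMem hnotmem,
          Finset.card_image_of_injective _ shp_inj, hcard]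
      -- ¬ NAA
      · rintro ⟨b, hb, c, hc, hbc⟩
        rcases hmem b hb with rfl | ⟨a, ha, rfl⟩ <;> rcases hmem c hc with rfl | ⟨a', ha', rfl⟩
        · have h3 : (m : ℕ) + 2 + 1 = t := hbc
          omega
        · have h3 : (m : ℕ) + 2 + 1 = sh t a'.1 := hbc
          have h2 : sh t a'.1 ≤ m + 1 := sh_le_of_le (by have := hv.1 a' ha'; omega)
          omega
        · have h3 : sh t a.2 + 1 = t := hbc
          have h4 := hs1 a ha
          simp only [sh] at h3; split_ifs at h3 <;> omega
        · have h3 : sh t a.2 + 1 = sh t a'.1 := hbc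
          have h4 : a.2 + 1 = a'.1 := by
            simp only [sh] at h3; split_ifs at h3 <;> omega
          exact hna ⟨a, ha, a', ha', h4⟩
      -- ¬ LNA
      · rintro ⟨b, hb, c, hc, hbc, hlt⟩
        rcases hmem b hb with rfl | ⟨a, ha, rfl⟩ <;> rcases hmem c hc with rfl | ⟨a', ha', rfl⟩
        · omega
        · -- b = (t, m+2), c = shp a'
          have h3 : t + 1 = sh t a'.1 := hbc
          have h4 := hs2 a' ha'
          simp only [sh] at h3; split_ifs at h3 <;> omega
        · -- c = (t, m+2): snd m+2 < sh t a.2 ≤ m+1, absurd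
          have h3 : (m : ℕ) + 2 < sh t a.2 := hlt
          have h2 : sh t a.2 ≤ m + 1 := sh_le_of_le (hv.1 a ha).2.2
          omega
        · have h3 : sh t a.1 + 1 = sh t a'.1 := hbc
          have h5 : sh t a'.2 < sh t a.2 := hlt
          have h6 : a'.2 < a.2 := sh_lt.1 h5
          have h4 : a.1 + 1 = a'.1 := by
            simp only [sh] at h3; split_ifs at h3 <;> omega
          exact hln ⟨a, ha, a', ha', h4, h6⟩
      -- has an arc ending at m+2
      · push_neg
        exact ⟨(t, m+2), Finset.mem_insert_self _ _, rfl⟩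
    -- injectivity
    · rintro ⟨A₁, t₁⟩ hp₁ ⟨A₂, t₂⟩ hp₂ heq
      simp only [Finset.mem_sigma, mem_filter, mem_arcsets, mem_Icc] at hp₁ hp₂
      change insert (t₁, m+2) (A₁.image (shp t₁)) = insert (t₂, m+2) (A₂.image (shp t₂)) at heq
      have hsnd : ∀ (A : Finset (ℕ × ℕ)) (t : ℕ), ValidA m A →
          ∀ b ∈ A.image (shp t), b.2 ≠ m + 2 := by
        intro A t hv b hb
        simp only [mem_image] at hb
        obtain ⟨a, ha, rfl⟩ := hb
        have := sh_le_of_le (t := t) (hv.1 a ha).2.2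
        simp only [shp]
        omega
      have ht : t₁ = t₂ := by
        have h1 : ((t₁ : ℕ), m+2) ∈ insert ((t₂ : ℕ), m+2) (A₂.image (shp t₂)) := by
          rw [← heq]; exact Finset.mem_insert_self _ _
        rcases Finset.mem_insert.1 h1 with h | h
        · exact congrArg Prod.fst h
        · exact absurd rfl (hsnd A₂ t₂ hp₂.1.1 _ h)
      subst ht
      have hA : A₁.image (shp t₁) = A₂.image (shp t₁) := by
        ext p
        constructor
        · intro hmem
          have h1 : p ∈ insert ((t₁ : ℕ), m+2) (A₂.image (shp t₁)) := by
            rw [← heq]; exact Finset.mem_insert_of_mem hmem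
          rcases Finset.mem_insert.1 h1 with rfl | h
          · exact absurd rfl (hsnd A₁ t₁ hp₁.1.1 _ hmem)
          · exact h
        · intro hmem
          have h1 : p ∈ insert ((t₁ : ℕ), m+2) (A₁.image (shp t₁)) := by
            rw [heq]; exact Finset.mem_insert_of_mem hmem
          rcases Finset.mem_insert.1 h1 with rfl | h
          · exact absurd rfl (hsnd A₂ t₁ hp₂.1.1 _ hmem)
          · exact h
      have : A₁ = A₂ := Finset.image_injective shp_inj hA
      subst this
      rfl
    -- surjectivity
    · intro B hB
      simp only [mem_filter, mem_arcsets] at hB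
      obtain ⟨hv, ⟨hmat, hcard, hna, hln⟩, hex⟩ := hB
      push_neg at hex
      obtain ⟨b0, hb0, hb02⟩ := hex
      obtain ⟨t, b2⟩ := b0
      have hb2' : b2 = m + 2 := hb02
      subst hb2'
      have htb := hv.1 _ hb0
      have ht1 : 1 ≤ t := htb.1
      have ht2 : t ≤ m + 1 := by
        have := htb.2.1; omega
      set A₀ := B.erase (t, m+2) with hA₀
      have hA₀mem : ∀ a ∈ A₀, a ∈ B := fun a ha => Finset.mem_of_mem_erase ha
      have hfst_ne : ∀ a ∈ A₀, a.1 ≠ t := by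
        intro a ha h
        have : a = (t, m+2) := hv.2.1 a (hA₀mem a ha) (t, m+2) hb0 h
        exact Finset.notMem_erase _ _ (this ▸ ha)
      have hsnd_ne : ∀ a ∈ A₀, a.2 ≠ t := by
        intro a ha h
        exact hmat a (hA₀mem a ha) (t, m+2) hb0 h
      have hsnd_le : ∀ a ∈ A₀, a.2 ≤ m + 1 := by
        intro a ha
        have hb := hv.1 a (hA₀mem a ha)
        have : a.2 ≠ m + 2 := by
          intro h
          have : a = (t, m+2) := hv.2.2 a (hA₀mem a ha) (t, m+2) hb0 h
          exact Finset.notMem_erase _ _ (this ▸ ha)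
        omega
      have hnadj : ∀ a ∈ A₀, a.2 + 1 ≠ t := by
        intro a ha h
        exact hna ⟨a, hA₀mem a ha, (t, m+2), hb0, h⟩
      have hnadj2 : ∀ a ∈ A₀, a.1 ≠ t + 1 := by
        intro a ha h
        have hb := hv.1 a (hA₀mem a ha)
        exact hln ⟨(t, m+2), hb0, a, hA₀mem a ha, h.symm, by
          have := hsnd_le a ha; omega⟩
      -- the downshifted set
      have hkey : ∀ a ∈ A₀, shp t (ushp t a) = a := by
        intro a ha
        simp only [shp, ushp]
        rw [sh_ush (hfst_ne a ha), sh_ush (hsnd_ne a ha)]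
      have hush_inj : ∀ a ∈ A₀, ∀ b ∈ A₀, ushp t a = ushp t b → a = b := by
        intro a ha b hb h
        rw [← hkey a ha, ← hkey b hb, h]
      have hcard₀ : A₀.card = k := by
        have : B.card = A₀.card + 1 := by
          rw [hA₀, Finset.card_erase_of_mem hb0]
          have : 1 ≤ B.card := Finset.card_pos.2 ⟨_, hb0⟩
          omega
        omega
      refine ⟨⟨A₀.image (ushp t), t⟩, ?_, ?_⟩
      · simp only [Finset.mem_sigma, mem_filter, mem_arcsets, mem_Icc]
        have himem : ∀ a' ∈ A₀.image (ushp t), ∃ a ∈ A₀, ushp t a = a' := by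
          intro a' ha'
          simp only [mem_image] at ha'
          exact ha'
        refine ⟨⟨⟨?_, ?_, ?_⟩, ?_, ?_, ?_, ?_⟩, ⟨ht1, ht2⟩, ?_, ?_⟩
        -- bounds
        · intro a' ha'
          obtain ⟨a, ha, rfl⟩ := himem a' ha'
          have hb := hv.1 a (hA₀mem a ha)
          have h1 := hfst_ne a ha
          have h2 := hsnd_ne a ha
          have h3 := hsnd_le a ha
          simp only [ushp, ush]
          split_ifs <;> omega
        -- FstU
        · intro a' ha' c' hc' h
          obtain ⟨a, ha, rfl⟩ := himem a' ha'
          obtain ⟨c, hc, rfl⟩ := himem c' hc'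
          have h1 : a.1 = c.1 := by
            have h2 : ush t a.1 = ush t c.1 := h
            have := hfst_ne a ha
            have := hfst_ne c hc
            simp only [ush] at h2; split_ifs at h2 <;> omega
          exact congrArg (ushp t) (hv.2.1 a (hA₀mem a ha) c (hA₀mem c hc) h1)
        -- SndU
        · intro a' ha' c' hc' h
          obtain ⟨a, ha, rfl⟩ := himem a' ha'
          obtain ⟨c, hc, rfl⟩ := himem c' hc'
          have h1 : a.2 = c.2 := by
            have h2 : ush t a.2 = ush t c.2 := h
            have := hsnd_ne a ha
            have := hsnd_ne c hc
            simp only [ush] at h2; split_ifs at h2 <;> omega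
          exact congrArg (ushp t) (hv.2.2 a (hA₀mem a ha) c (hA₀mem c hc) h1)
        -- MatA
        · intro a' ha' c' hc' h
          obtain ⟨a, ha, rfl⟩ := himem a' ha'
          obtain ⟨c, hc, rfl⟩ := himem c' hc'
          have h1 : a.2 = c.1 := by
            have h2 : ush t a.2 = ush t c.1 := h
            have := hsnd_ne a ha
            have := hfst_ne c hc
            simp only [ush] at h2; split_ifs at h2 <;> omega
          exact hmat a (hA₀mem a ha) c (hA₀mem c hc) h1
        -- card
        · rw [Finset.card_image_of_injOn hush_inj, hcard₀]
        -- ¬ NAA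
        · rintro ⟨a', ha', c', hc', h⟩
          obtain ⟨a, ha, rfl⟩ := himem a' ha'
          obtain ⟨c, hc, rfl⟩ := himem c' hc'
          have h2 : ush t a.2 + 1 = ush t c.1 := h
          have h3 := hsnd_ne a ha
          have h4 := hfst_ne c hc
          have h5 := hnadj a ha
          have h6 : a.2 + 1 = c.1 := by
            simp only [ush] at h2; split_ifs at h2 <;> omega
          exact hna ⟨a, hA₀mem a ha, c, hA₀mem c hc, h6⟩
        -- ¬ LNA
        · rintro ⟨a', ha', c', hc', h, hlt⟩
          obtain ⟨a, ha, rfl⟩ := himem a' ha'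
          obtain ⟨c, hc, rfl⟩ := himem c' hc'
          have h2 : ush t a.1 + 1 = ush t c.1 := h
          have hlt2 : ush t c.2 < ush t a.2 := hlt
          have h3 := hfst_ne a ha
          have h4 := hfst_ne c hc
          have h5 := hnadj2 c hc
          have hc2 : c.2 < a.2 := by
            have := hsnd_ne a ha
            have := hsnd_ne c hc
            simp only [ush] at hlt2; split_ifs at hlt2 <;> omega
          have h6 : a.1 + 1 = c.1 := by
            simp only [ush] at h2; split_ifs at h2 <;> omega
          exact hln ⟨a, hA₀mem a ha, c, hA₀mem c hc, h6, hc2⟩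
        -- slot condition 1 : a'.2 + 1 ≠ t
        · intro a' ha'
          obtain ⟨a, ha, rfl⟩ := himem a' ha'
          have h2 := hsnd_ne a ha
          have h3 := hnadj a ha
          show ush t a.2 + 1 ≠ t
          simp only [ush]; split_ifs <;> omega
        -- slot condition 2 : a'.1 ≠ t
        · intro a' ha'
          obtain ⟨a, ha, rfl⟩ := himem a' ha'
          have h2 := hfst_ne a ha
          have h3 := hnadj2 a ha
          show ush t a.1 ≠ t
          simp only [ush]; split_ifs <;> omega
      · show insert (t, m+2) ((A₀.image (ushp t)).image (shp t)) = B
        rw [Finset.image_image]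
        have himg : A₀.image (shp t ∘ ushp t) = A₀ := by
          apply Finset.image_congr ?_ |>.trans A₀.image_id
          intro a ha
          exact hkey a ha
        rw [himg, hA₀, Finset.insert_erase hb0]
  have hdef : QA (m+2) (k+1) = ((arcsets (m+2)).filter
      (fun A => MatA A ∧ A.card = k+1 ∧ ¬ NAA A ∧ ¬ LNA A)).card := rfl
  rw [hdef, hsplit, hL0, ← hL1, hT]
  rfl

end SPAux

namespace SPAux
open Finset

theorem QA_eq_StA : ∀ k j : ℕ, QA (2*k + j) k = StA (k + j + 1) (j + 1) := by
  intro k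
  induction k with
  | zero =>
    intro j
    rw [show 2*0 + j = j from by omega, QA_zero]
    rw [StA_self]
  | succ k ih =>
    intro j
    induction j with
    | zero =>
      have h1 := QA_rec (2*k) k
      have h2 : QA (2*k+1) (k+1) = 0 := QA_eq_zero (by omega)
      have h3 := ih 0
      have h4 := StA_rec (k+1) 0
      have h5 : StA (k+1) 0 = 0 := StA_zero (by omega)
      rw [h2, show 2*k+1-2*k = 1 from by omega] at h1
      rw [show 2*k + 0 = 2*k from by omega, show k + 0 + 1 = k + 1 from by omega] at h3
      rw [h3] at h1
      rw [h5] at h4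
      rw [show 2*(k+1) + 0 = 2*k+2 from by ring, show (k+1) + 0 + 1 = k + 2 from by ring,
        h1, h4]
    | succ j ihj =>
      have h1 := QA_rec (2*k + j + 1) k
      have h2 := ih (j+1)
      rw [show 2*k + (j+1) = 2*k + j + 1 from by ring,
        show k + (j+1) + 1 = k + j + 2 from by ring] at h2
      rw [show 2*(k+1) + j = 2*k + j + 1 + 1 from by ring,
        show (k+1) + j + 1 = k + j + 2 from by ring] at ihj
      have h4 := StA_rec (k+j+2) (j+1)
      rw [h2, ihj, show 2*k+j+1+1-2*k = j + 2 from by omega] at h1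
      rw [show 2*(k+1) + (j+1) = 2*k+j+1+2 from by ring, h1,
        show (k+1)+(j+1)+1 = k+j+2+1 from by ring, h4]

end SPAux

namespace SPAux
open Finset

/-! ### Connectivity for arc sets -/

def rel (A : Finset (ℕ × ℕ)) (u v : ℕ) : Prop := (u, v) ∈ A
abbrev RTG (A : Finset (ℕ × ℕ)) := Relation.ReflTransGen (rel A)
def conn (A : Finset (ℕ × ℕ)) (x y : ℕ) : Prop := RTG A x y ∨ RTG A y x

section Conn
variable {s : ℕ} {A : Finset (ℕ × ℕ)}

theorem rtg_le (hv : ValidA s A) {x y : ℕ} (h : RTG A x y) : x ≤ y := by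
  induction h with
  | refl => exact le_rfl
  | tail h1 h2 ih =>
    have := (hv.1 _ h2).2.1
    omega

theorem rtg_comp (hv : ValidA s A) {x y z : ℕ} (hxy : RTG A x y) (hxz : RTG A x z) :
    RTG A y z ∨ RTG A z y := by
  revert hxz
  induction hxy using Relation.ReflTransGen.head_induction_on with
  | refl => exact fun hxz => Or.inl hxz
  | head h' h ih =>
    rename_i a c
    intro hxz
    rcases Relation.ReflTransGen.cases_head hxz with rfl | ⟨w, hw, hwz⟩
    · exact Or.inr (Relation.ReflTransGen.head h' h)
    · have : c = w := by
        have := hv.2.1 _ h' _ hw rfl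
        exact congrArg Prod.snd this
      subst this
      exact ih hwz

theorem rtg_comp' (hv : ValidA s A) {x y z : ℕ} (hyx : RTG A y x) (hzx : RTG A z x) :
    RTG A y z ∨ RTG A z y := by
  induction hyx with
  | refl => exact Or.inr hzx
  | tail h1 hbc ih =>
    rename_i b c
    rcases Relation.ReflTransGen.cases_tail hzx with rfl | ⟨w, hw, hwc⟩
    · exact Or.inl (Relation.ReflTransGen.tail h1 hbc)
    · have : w = b := by
        have := hv.2.2 _ hwc _ hbc rfl
        exact congrArg Prod.fst this
      subst this
      exact ih hw

theorem conn_refl (A : Finset (ℕ × ℕ)) (x : ℕ) : conn A x x := Or.inl Relation.ReflTransGen.refl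

theorem conn_symm {x y : ℕ} (h : conn A x y) : conn A y x := h.symm

theorem conn_trans (hv : ValidA s A) {x y z : ℕ} (h1 : conn A x y) (h2 : conn A y z) :
    conn A x z := by
  rcases h1 with h1 | h1 <;> rcases h2 with h2 | h2
  · exact Or.inl (h1.trans h2)
  · exact rtg_comp' hv h1 h2
  · exact (rtg_comp hv h2 h1).symm
  · exact Or.inr (h2.trans h1)

theorem rtg_mem_Icc (hv : ValidA s A) {x y : ℕ} (h : RTG A x y) (hx : x ∈ Icc 1 s) :
    y ∈ Icc 1 s := by
  induction h with
  | refl => exact hx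
  | tail h1 h2 ih =>
    have := hv.1 _ h2
    simp only [mem_Icc]
    omega

theorem conn_mem_Icc (hv : ValidA s A) {x y : ℕ} (h : conn A x y) (hx : x ∈ Icc 1 s) :
    y ∈ Icc 1 s := by
  rcases h with h | h
  · exact rtg_mem_Icc hv h hx
  · rcases Relation.ReflTransGen.cases_head h with rfl | ⟨c, hc, -⟩
    · exact hx
    · have := hv.1 _ hc
      simp only [mem_Icc]
      omega

end Conn

/-! ### The partition associated to a valid arc set -/

open scoped Classical in
noncomputable def ofA (s : ℕ) (A : Finset (ℕ × ℕ)) (hv : ValidA s A) :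
    Finpartition (Icc 1 s) where
  parts := (Icc 1 s).image (fun x => (Icc 1 s).filter (conn A x))
  supIndep := by
    classical
    rw [Finset.supIndep_iff_pairwiseDisjoint]
    rintro B₁ hB₁ B₂ hB₂ hne
    simp only [coe_image, Set.mem_image, mem_coe] at hB₁ hB₂
    obtain ⟨x, hx, rfl⟩ := hB₁
    obtain ⟨y, hy, rfl⟩ := hB₂
    by_cases hconn : conn A x y
    · exfalso
      apply hne
      ext z
      simp only [mem_filter, and_congr_right_iff]
      intro _
      constructor
      · exact fun h => conn_trans hv (conn_symm hconn) h
      · exact fun h => conn_trans hv hconn h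
    · simp only [Function.onFun, id_eq]
      rw [Finset.disjoint_left]
      intro z hz1 hz2
      simp only [mem_filter] at hz1 hz2
      exact hconn (conn_trans hv hz1.2 (conn_symm hz2.2))
  sup_parts := by
    classical
    apply le_antisymm
    · rw [Finset.sup_le_iff]
      intro B hB
      simp only [mem_image] at hB
      obtain ⟨x, hx, rfl⟩ := hB
      exact Finset.filter_subset _ _
    · intro x hx
      rw [Finset.mem_sup]
      refine ⟨(Icc 1 s).filter (conn A x), ?_, ?_⟩
      · simp only [mem_image]
        exact ⟨x, hx, rfl⟩
      · simp only [id_eq, mem_filter]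
        exact ⟨hx, conn_refl A x⟩
  bot_notMem := by
    classical
    simp only [bot_eq_empty, mem_image]
    rintro ⟨x, hx, hempty⟩
    have : x ∈ (Icc 1 s).filter (conn A x) := by
      simp only [mem_filter]
      exact ⟨hx, conn_refl A x⟩
    rw [hempty] at this
    simp at this

open scoped Classical in
theorem mem_ofA_parts {s : ℕ} {A : Finset (ℕ × ℕ)} (hv : ValidA s A) {B : Finset ℕ} :
    B ∈ (ofA s A hv).parts ↔ ∃ x ∈ Icc 1 s, B = (Icc 1 s).filter (conn A x) := by
  classical
  simp only [ofA, mem_image]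
  constructor
  · rintro ⟨x, hx, rfl⟩; exact ⟨x, hx, rfl⟩
  · rintro ⟨x, hx, rfl⟩; exact ⟨x, hx, rfl⟩

end SPAux

namespace SPAux
open Finset

open scoped Classical in
noncomputable def toA {n : ℕ} (P : Finpartition (Icc 1 n)) : Finset (ℕ × ℕ) :=
  (Icc 1 n ×ˢ Icc 1 n).filter (IsArc P)

theorem mem_toA {n : ℕ} {P : Finpartition (Icc 1 n)} {a : ℕ × ℕ} :
    a ∈ toA P ↔ IsArc P a := by
  classical
  simp only [toA, mem_filter, mem_product, and_iff_right_iff_imp]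
  rintro ⟨hlt, B, hB, h1, h2, h3⟩
  have hsub : B ⊆ Icc 1 n := P.le hB
  exact ⟨hsub h1, hsub h2⟩

theorem validA_toA {n : ℕ} (P : Finpartition (Icc 1 n)) : ValidA n (toA P) := by
  classical
  refine ⟨?_, ?_, ?_⟩
  · intro a ha
    have hb : a ∈ (Icc 1 n ×ˢ Icc 1 n) := Finset.mem_of_mem_filter a ha
    simp only [mem_product, mem_Icc] at hb
    have hlt := (mem_toA.1 ha).1
    omega
  · intro a ha b hb hab
    obtain ⟨hlta, Ba, hBa, ha1, ha2, ha3⟩ := mem_toA.1 ha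
    obtain ⟨hltb, Bb, hBb, hb1, hb2, hb3⟩ := mem_toA.1 hb
    have hBe : Ba = Bb := P.eq_of_mem_parts hBa hBb ha1 (by rwa [← hab] at hb1)
    subst hBe
    have h2 : a.2 = b.2 := by
      rcases lt_trichotomy a.2 b.2 with h | h | h
      · exact absurd ⟨hab ▸ hlta, h⟩ (hb3 a.2 ha2)
      · exact h
      · exact absurd ⟨hab.symm ▸ hltb, h⟩ (ha3 b.2 hb2)
    exact Prod.ext_iff.2 ⟨hab, h2⟩
  · intro a ha b hb hab
    obtain ⟨hlta, Ba, hBa, ha1, ha2, ha3⟩ := mem_toA.1 ha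
    obtain ⟨hltb, Bb, hBb, hb1, hb2, hb3⟩ := mem_toA.1 hb
    have hBe : Ba = Bb := P.eq_of_mem_parts hBa hBb ha2 (by rwa [← hab] at hb2)
    subst hBe
    have h1 : a.1 = b.1 := by
      rcases lt_trichotomy a.1 b.1 with h | h | h
      · exact absurd ⟨h, hab.symm ▸ hltb⟩ (ha3 b.1 hb1)
      · exact h
      · exact absurd ⟨h, hab ▸ hlta⟩ (hb3 a.1 ha1)
    exact Prod.ext_iff.2 ⟨h1, hab⟩

theorem arc_next {n : ℕ} (P : Finpartition (Icc 1 n)) {B : Finset ℕ} (hB : B ∈ P.parts)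
    {x y : ℕ} (hx : x ∈ B) (hy : y ∈ B) (hxy : x < y) :
    ∃ z ∈ B, x < z ∧ z ≤ y ∧ IsArc P (x, z) := by
  classical
  have hne : (B.filter (fun c => x < c)).Nonempty := ⟨y, by simp [mem_filter, hy, hxy]⟩
  set z := (B.filter (fun c => x < c)).min' hne with hzdef
  have hzmem := (B.filter (fun c => x < c)).min'_mem hne
  rw [← hzdef] at hzmem
  simp only [mem_filter] at hzmem
  refine ⟨z, hzmem.1, hzmem.2, ?_, ?_⟩
  · exact Finset.min'_le _ y (by simp [mem_filter, hy, hxy])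
  · refine ⟨hzmem.2, B, hB, hx, hzmem.1, ?_⟩
    rintro c hc ⟨h1, h2⟩
    have h1' : x < c := h1
    have h2' : c < z := h2
    have : z ≤ c := Finset.min'_le _ c (by simp [mem_filter, hc, h1'])
    omega

theorem arc_pred {n : ℕ} (P : Finpartition (Icc 1 n)) {B : Finset ℕ} (hB : B ∈ P.parts)
    {x y : ℕ} (hx : x ∈ B) (hy : y ∈ B) (hxy : y < x) :
    ∃ w ∈ B, IsArc P (w, x) := by
  classical
  have hne : (B.filter (fun c => c < x)).Nonempty := ⟨y, by simp [mem_filter, hy, hxy]⟩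
  set w := (B.filter (fun c => c < x)).max' hne with hwdef
  have hzmem := (B.filter (fun c => c < x)).max'_mem hne
  rw [← hwdef] at hzmem
  simp only [mem_filter] at hzmem
  refine ⟨w, hzmem.1, hzmem.2, B, hB, hzmem.1, hx, ?_⟩
  rintro c hc ⟨h1, h2⟩
  have h1' : w < c := h1
  have h2' : c < x := h2
  have : c ≤ w := Finset.le_max' _ c (by simp [mem_filter, hc, h2'])
  omega

theorem rtg_of_part {n : ℕ} (P : Finpartition (Icc 1 n)) {B : Finset ℕ} (hB : B ∈ P.parts) :
    ∀ d x y, x ∈ B → y ∈ B → x ≤ y → y - x ≤ d → RTG (toA P) x y := by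
  intro d
  induction d with
  | zero =>
    intro x y hx hy hxy hd
    have : x = y := by omega
    subst this
    exact Relation.ReflTransGen.refl
  | succ d ih =>
    intro x y hx hy hxy hd
    rcases eq_or_lt_of_le hxy with rfl | hlt
    · exact Relation.ReflTransGen.refl
    · obtain ⟨z, hzB, hxz, hzy, harc⟩ := arc_next P hB hx hy hlt
      exact Relation.ReflTransGen.head (mem_toA.2 harc) (ih z y hzB hy hzy (by omega))

theorem conn_of_part {n : ℕ} (P : Finpartition (Icc 1 n)) {B : Finset ℕ} (hB : B ∈ P.parts)
    {x y : ℕ} (hx : x ∈ B) (hy : y ∈ B) : conn (toA P) x y := by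
  rcases le_total x y with h | h
  · exact Or.inl (rtg_of_part P hB (y - x) x y hx hy h le_rfl)
  · exact Or.inr (rtg_of_part P hB (x - y) y x hy hx h le_rfl)

theorem part_of_rtg {n : ℕ} {P : Finpartition (Icc 1 n)} {x y : ℕ} (h : RTG (toA P) x y) :
    x = y ∨ ∃ B ∈ P.parts, x ∈ B ∧ y ∈ B := by
  induction h with
  | refl => exact Or.inl rfl
  | tail h1 h2 ih =>
    rename_i b c
    obtain ⟨-, B', hB', hb, hc, -⟩ := mem_toA.1 h2
    rcases ih with rfl | ⟨B, hB, hxB, hbB⟩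
    · exact Or.inr ⟨B', hB', hb, hc⟩
    · have : B = B' := P.eq_of_mem_parts hB hB' hbB hb
      subst this
      exact Or.inr ⟨B, hB, hxB, hc⟩

theorem part_of_conn {n : ℕ} {P : Finpartition (Icc 1 n)} {x y : ℕ} (h : conn (toA P) x y) :
    x = y ∨ ∃ B ∈ P.parts, x ∈ B ∧ y ∈ B := by
  rcases h with h | h
  · exact part_of_rtg h
  · rcases part_of_rtg h with rfl | ⟨B, hB, h1, h2⟩
    · exact Or.inl rfl
    · exact Or.inr ⟨B, hB, h2, h1⟩

open scoped Classical in
theorem part_eq_class {n : ℕ} (P : Finpartition (Icc 1 n)) {B : Finset ℕ} (hB : B ∈ P.parts)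
    {x : ℕ} (hx : x ∈ B) : B = (Icc 1 n).filter (conn (toA P) x) := by
  ext y
  simp only [mem_filter]
  constructor
  · intro hy
    exact ⟨P.le hB hy, conn_of_part P hB hx hy⟩
  · rintro ⟨hyIcc, hconn⟩
    rcases part_of_conn hconn with rfl | ⟨B', hB', hxB', hyB'⟩
    · exact hx
    · have : B = B' := P.eq_of_mem_parts hB hB' hx hxB'
      subst this
      exact hyB'

theorem toA_inj {n : ℕ} : Function.Injective (toA (n := n)) := by
  classical
  have key : ∀ P₁ P₂ : Finpartition (Icc 1 n), toA P₁ = toA P₂ →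
      ∀ B ∈ P₁.parts, B ∈ P₂.parts := by
    intro P₁ P₂ h B hB
    obtain ⟨x, hx⟩ := P₁.nonempty_of_mem_parts hB
    have hxI : x ∈ Icc 1 n := P₁.le hB hx
    have h1 : B = (Icc 1 n).filter (conn (toA P₁) x) := part_eq_class P₁ hB hx
    have h2 : P₂.part x = (Icc 1 n).filter (conn (toA P₂) x) :=
      part_eq_class P₂ (P₂.part_mem.2 hxI) (P₂.mem_part hxI)
    rw [h] at h1
    rw [← h2] at h1
    rw [h1]
    exact P₂.part_mem.2 hxI
  intro P₁ P₂ h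
  apply Finpartition.ext
  ext B
  exact ⟨fun hB => key P₁ P₂ h B hB, fun hB => key P₂ P₁ h.symm B hB⟩

theorem toA_ofA {s : ℕ} {A : Finset (ℕ × ℕ)} (hv : ValidA s A) : toA (ofA s A hv) = A := by
  classical
  ext a
  rw [mem_toA]
  constructor
  · rintro ⟨hlt, B, hBparts, h1, h2, h3⟩
    rw [mem_ofA_parts hv] at hBparts
    obtain ⟨x, hxI, rfl⟩ := hBparts
    simp only [mem_filter] at h1 h2
    have hconn : conn A a.1 a.2 := conn_trans hv (conn_symm h1.2) h2.2
    have hrtg : RTG A a.1 a.2 := by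
      rcases hconn with h | h
      · exact h
      · have := rtg_le hv h
        omega
    rcases Relation.ReflTransGen.cases_head hrtg with heq | ⟨w, hw, hwz⟩
    · omega
    · have hbw := hv.1 _ hw
      have hwle : w ≤ a.2 := rtg_le hv hwz
      have hwB : w ∈ (Icc 1 s).filter (conn A x) := by
        simp only [mem_filter, mem_Icc]
        refine ⟨⟨by omega, by omega⟩, conn_trans hv h1.2 (Or.inl (Relation.ReflTransGen.single hw))⟩
      have hnb := h3 w hwB
      have : w = a.2 := by
        simp only at hbw
        omega
      subst this
      exact hw
  · intro ha
    have hb := hv.1 a ha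
    have ha1I : a.1 ∈ Icc 1 s := by simp only [mem_Icc]; omega
    have ha2I : a.2 ∈ Icc 1 s := by simp only [mem_Icc]; omega
    refine ⟨hb.2.1, (Icc 1 s).filter (conn A a.1), ?_, ?_, ?_, ?_⟩
    · rw [mem_ofA_parts hv]
      exact ⟨a.1, ha1I, rfl⟩
    · simp only [mem_filter]
      exact ⟨ha1I, conn_refl A a.1⟩
    · simp only [mem_filter]
      exact ⟨ha2I, Or.inl (Relation.ReflTransGen.single ha)⟩
    · rintro c hc ⟨hc1, hc2⟩
      simp only [mem_filter] at hc
      rcases hc.2 with h | h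
      · rcases Relation.ReflTransGen.cases_head h with rfl | ⟨w, hw, hwc⟩
        · omega
        · have : (a.1, w) = a := hv.2.1 _ hw a ha rfl
          have hw2 : w = a.2 := by rw [← this]
          subst hw2
          have := rtg_le hv hwc
          omega
      · have := rtg_le hv h
        omega

end SPAux

namespace SPAux
open Finset

theorem numArcs_eq {n : ℕ} (P : Finpartition (Icc 1 n)) : numArcs P = (toA P).card := by
  rw [numArcs, show {a : ℕ × ℕ | IsArc P a} = ↑(toA P) by
    ext a; simp only [Set.mem_setOf_eq, Finset.mem_coe, mem_toA]]
  exact Set.ncard_coe_finset _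

theorem nbr_iff {n : ℕ} (P : Finpartition (Icc 1 n)) : HasNbrAlign P ↔ NAA (toA P) := by
  constructor
  · rintro ⟨a, b, h1, h2, h3⟩
    exact ⟨a, mem_toA.2 h1, b, mem_toA.2 h2, h3⟩
  · rintro ⟨a, h1, b, h2, h3⟩
    exact ⟨a, b, mem_toA.1 h1, mem_toA.1 h2, h3⟩

theorem ln_iff {n : ℕ} (P : Finpartition (Icc 1 n)) : HasLeftNesting P ↔ LNA (toA P) := by
  constructor
  · rintro ⟨a, b, h1, h2, h3, h4⟩
    exact ⟨a, mem_toA.2 h1, b, mem_toA.2 h2, h3, h4⟩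
  · rintro ⟨a, h1, b, h2, h3, h4⟩
    exact ⟨a, b, mem_toA.1 h1, mem_toA.1 h2, h3, h4⟩

theorem exists_middle {B : Finset ℕ} (h : 2 < B.card) :
    ∃ x ∈ B, (∃ y ∈ B, y < x) ∧ (∃ z ∈ B, x < z) := by
  obtain ⟨u, v, w, hu, hv, hw, huv, huw, hvw⟩ := Finset.two_lt_card_iff.1 h
  rcases lt_trichotomy u v with h1 | h1 | h1
  · rcases lt_trichotomy v w with h2 | h2 | h2
    · exact ⟨v, hv, ⟨u, hu, h1⟩, ⟨w, hw, h2⟩⟩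
    · exact absurd h2 hvw
    · rcases lt_trichotomy u w with h3 | h3 | h3
      · exact ⟨w, hw, ⟨u, hu, h3⟩, ⟨v, hv, h2⟩⟩
      · exact absurd h3 huw
      · exact ⟨u, hu, ⟨w, hw, h3⟩, ⟨v, hv, h1⟩⟩
  · exact absurd h1 huv
  · rcases lt_trichotomy u w with h2 | h2 | h2
    · exact ⟨u, hu, ⟨v, hv, h1⟩, ⟨w, hw, h2⟩⟩
    · exact absurd h2 huw
    · rcases lt_trichotomy v w with h3 | h3 | h3
      · exact ⟨w, hw, ⟨v, hv, h3⟩, ⟨u, hu, h2⟩⟩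
      · exact absurd h3 hvw
      · exact ⟨v, hv, ⟨w, hw, h3⟩, ⟨u, hu, h1⟩⟩

theorem isMatching_iff {n : ℕ} (P : Finpartition (Icc 1 n)) :
    IsMatching P ↔ MatA (toA P) := by
  classical
  constructor
  · intro hm a ha b hb hab
    obtain ⟨hlta, Ba, hBa, ha1, ha2, -⟩ := mem_toA.1 ha
    obtain ⟨hltb, Bb, hBb, hb1, hb2, -⟩ := mem_toA.1 hb
    have hBe : Ba = Bb := P.eq_of_mem_parts hBa hBb ha2 (by rwa [← hab] at hb1)
    have hsub : ({a.1, a.2, b.2} : Finset ℕ) ⊆ Ba := by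
      intro c hc
      simp only [mem_insert, mem_singleton] at hc
      rcases hc with rfl | rfl | rfl
      · exact ha1
      · exact ha2
      · rw [hBe]; exact hb2
    have hcard3 : ({a.1, a.2, b.2} : Finset ℕ).card = 3 := by
      rw [Finset.card_insert_of_notMem (by
          simp only [mem_insert, mem_singleton]
          push_neg
          omega),
        Finset.card_insert_of_notMem (by
          simp only [mem_singleton]
          omega),
        Finset.card_singleton]
    have h3 : 3 ≤ Ba.card := hcard3 ▸ Finset.card_le_card hsub
    have h2 := hm Ba hBa
    omega
  · intro hmat B hB
    by_contra hcard
    push_neg at hcard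
    obtain ⟨x, hx, ⟨y, hy, hyx⟩, ⟨z, hz, hxz⟩⟩ := exists_middle hcard
    obtain ⟨w, hwB, harc1⟩ := arc_pred P hB hx hy hyx
    obtain ⟨z', hz'B, hxz', hz'z, harc2⟩ := arc_next P hB hx hz hxz
    exact hmat (w, x) (mem_toA.2 harc1) (x, z') (mem_toA.2 harc2) rfl

theorem card_toA {n : ℕ} (P : Finpartition (Icc 1 n)) :
    (toA P).card + P.parts.card = n := by
  classical
  have hsnd : ((toA P).image Prod.snd).card = (toA P).card :=
    card_snd_image (validA_toA P).2.2
  set mins := P.parts.attach.image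
    (fun B => B.1.min' (P.nonempty_of_mem_parts B.2)) with hmins
  have hminscard : mins.card = P.parts.card := by
    rw [hmins, Finset.card_image_of_injOn, Finset.card_attach]
    rintro ⟨B₁, h₁⟩ - ⟨B₂, h₂⟩ - h
    simp only at h
    have hm₁ : B₁.min' (P.nonempty_of_mem_parts h₁) ∈ B₁ := Finset.min'_mem _ _
    have hm₂ : B₂.min' (P.nonempty_of_mem_parts h₂) ∈ B₂ := Finset.min'_mem _ _
    rw [h] at hm₁
    exact Subtype.ext (P.eq_of_mem_parts h₁ h₂ hm₁ hm₂)
  have hcover : Icc 1 n = ((toA P).image Prod.snd) ∪ mins := by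
    apply Finset.Subset.antisymm
    · intro x hx
      have hBp := P.part_mem.2 hx
      have hxB := P.mem_part hx
      have hmin_le : (P.part x).min' ⟨x, hxB⟩ ≤ x := Finset.min'_le _ x hxB
      rcases eq_or_lt_of_le hmin_le with heq | hlt
      · apply Finset.mem_union_right
        rw [hmins]
        simp only [mem_image, mem_attach, true_and]
        exact ⟨⟨P.part x, hBp⟩, heq⟩
      · obtain ⟨w, hwB, harc⟩ := arc_pred P hBp hxB (Finset.min'_mem _ ⟨x, hxB⟩) hlt
        apply Finset.mem_union_left
        simp only [mem_image]
        exact ⟨(w, x), mem_toA.2 harc, rfl⟩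
    · apply Finset.union_subset
      · intro x hx
        simp only [mem_image] at hx
        obtain ⟨a, ha, rfl⟩ := hx
        have := (validA_toA P).1 a ha
        simp only [mem_Icc]
        omega
      · intro x hx
        rw [hmins] at hx
        simp only [mem_image, mem_attach, true_and] at hx
        obtain ⟨⟨B, hB⟩, rfl⟩ := hx
        exact P.le hB (Finset.min'_mem _ _)
  have hdisj : Disjoint ((toA P).image Prod.snd) mins := by
    rw [Finset.disjoint_left]
    intro x hx hx'
    simp only [mem_image] at hx
    obtain ⟨a, ha, rfl⟩ := hx
    rw [hmins] at hx'
    simp only [mem_image, mem_attach, true_and] at hx'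
    obtain ⟨⟨B, hB⟩, hmin⟩ := hx'
    have hmin' : B.min' (P.nonempty_of_mem_parts hB) = a.2 := hmin
    obtain ⟨hlt, B', hB', h1, h2, -⟩ := mem_toA.1 ha
    have hminB : B.min' (P.nonempty_of_mem_parts hB) ∈ B := Finset.min'_mem _ _
    have hBe : B = B' := P.eq_of_mem_parts hB hB' (hmin' ▸ hminB) h2
    have : B.min' (P.nonempty_of_mem_parts hB) ≤ a.1 :=
      Finset.min'_le _ _ (hBe ▸ h1)
    omega
  have := congrArg Finset.card hcover
  rw [Finset.card_union_of_disjoint hdisj, Nat.card_Icc, hsnd, hminscard] at this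
  omega

end SPAux

namespace SPAux
open Finset

open scoped Classical in
theorem ncard_transfer {n : ℕ} (Φ : Finpartition (Icc 1 n) → Prop)
    (Ψ : Finset (ℕ × ℕ) → Prop) (h : ∀ P, Φ P ↔ Ψ (toA P)) :
    {P : Finpartition (Icc 1 n) | Φ P}.ncard = ((arcsets n).filter Ψ).card := by
  classical
  rw [← Set.ncard_image_of_injective _ (toA_inj (n := n))]
  have himg : toA '' {P : Finpartition (Icc 1 n) | Φ P} = ↑((arcsets n).filter Ψ) := by
    ext A
    simp only [Set.mem_image, Set.mem_setOf_eq, Finset.coe_filter, mem_arcsets,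
      Set.mem_setOf_eq]
    constructor
    · rintro ⟨P, hP, rfl⟩
      exact ⟨validA_toA P, (h P).1 hP⟩
    · rintro ⟨hv, hΨ⟩
      refine ⟨ofA n A hv, ?_, toA_ofA hv⟩
      rw [h, toA_ofA hv]
      exact hΨ
  rw [himg, Set.ncard_coe_finset]

theorem QA_eq_StA' {m k : ℕ} (h : 2*k ≤ m) : QA m k = StA (m+1-k) (m+1-2*k) := by
  have h1 := QA_eq_StA k (m - 2*k)
  rw [show 2*k + (m - 2*k) = m from by omega] at h1
  rw [h1, show k + (m - 2*k) + 1 = m+1-k from by omega,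
    show (m - 2*k) + 1 = m+1-2*k from by omega]

open scoped Classical in
theorem stirling_eq (s b : ℕ) : Stirling s b = StA s b := by
  refine Eq.trans (ncard_transfer (n := s) (fun P => P.parts.card = b)
    (fun A => s - A.card = b)
    (fun P => by
      have := card_toA P
      show P.parts.card = b ↔ s - (toA P).card = b
      constructor <;> intro <;> omega)) ?_
  show _ = StA s b
  unfold StA
  congr 1
  exact Finset.filter_congr_decidable _ _ _

open scoped Classical in
noncomputable def QT (m : ℕ) : ℕ :=
  ((arcsets m).filter (fun A => MatA A ∧ ¬ NAA A ∧ ¬ LNA A)).card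

open scoped Classical in
theorem total_transfer (m : ℕ) :
    {P : Finpartition (Finset.Icc 1 m) |
      IsMatching P ∧ ¬ HasNbrAlign P ∧ ¬ HasLeftNesting P}.ncard = QT m := by
  refine Eq.trans (ncard_transfer (n := m)
    (fun P => IsMatching P ∧ ¬ HasNbrAlign P ∧ ¬ HasLeftNesting P)
    (fun A => MatA A ∧ ¬ NAA A ∧ ¬ LNA A)
    (fun P => by
      show IsMatching P ∧ ¬ HasNbrAlign P ∧ ¬ HasLeftNesting P ↔
        MatA (toA P) ∧ ¬ NAA (toA P) ∧ ¬ LNA (toA P)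
      rw [isMatching_iff, nbr_iff, ln_iff])) ?_
  show _ = QT m
  unfold QT
  congr 1
  exact Finset.filter_congr_decidable _ _ _

open scoped Classical in
theorem QT_eq_sum (m : ℕ) : QT m = ∑ k ∈ Finset.range (m/2 + 1), QA m k := by
  have hdef : QT m
      = ((arcsets m).filter (fun A => MatA A ∧ ¬ NAA A ∧ ¬ LNA A)).card := rfl
  rw [hdef, Finset.card_eq_sum_card_fiberwise (f := fun A => A.card)
    (t := Finset.range (m/2 + 1)) (by
      intro A hA
      simp only [Finset.mem_coe, Finset.mem_filter, mem_arcsets] at hA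
      have := two_mul_card_le hA.1 hA.2.1
      simp only [Finset.mem_coe, Finset.mem_range]
      omega)]
  apply Finset.sum_congr rfl
  intro k hk
  have hfib : (((arcsets m).filter
      (fun A => MatA A ∧ ¬ NAA A ∧ ¬ LNA A)).filter (fun A => A.card = k))
      = (arcsets m).filter (fun A => MatA A ∧ A.card = k ∧ ¬ NAA A ∧ ¬ LNA A) := by
    ext A
    simp only [Finset.mem_filter]
    tauto
  rw [hfib]
  rfl

end SPAux


/-- The total number of partial matchings of `[n-1]` avoiding neighbor
alignments and left nestings equals `∑_{k=0}^{⌊(n-1)/2⌋} S(n-k, n-2k)`. -/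
theorem stmt_15 (n : ℕ) (hn : 1 ≤ n) :
    {P : Finpartition (Finset.Icc 1 (n - 1)) |
        IsMatching P ∧ ¬ HasNbrAlign P ∧ ¬ HasLeftNesting P}.ncard =
      ∑ k ∈ Finset.range ((n - 1) / 2 + 1), Stirling (n - k) (n - 2 * k) := by
  rw [SPAux.total_transfer (n-1), SPAux.QT_eq_sum (n-1)]
  apply Finset.sum_congr rfl
  intro k hk
  simp only [Finset.mem_range] at hk
  have h2k : 2*k ≤ n - 1 := by omega
  rw [SPAux.QA_eq_StA' h2k,
    show (n-1)+1-k = n - k from by omega, show (n-1)+1-2*k = n - 2*k from by omega]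
  exact (SPAux.stirling_eq (n-k) (n-2*k)).symm
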